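/- Let k, d, n be positive integers with d < n, let 0 ≤ i ≤ ⌊d/k⌋ and r = d − ki. The family 𝒜_{r,i} = {S ⊆ [n] : |S ∩ [n−r]| ≤ i} is k-wise (n−d)-union (the union of any k of its members has size at most ki + r = d) and has size |𝒜_{r,i}| = 2^r · Σ_{j=0}^{i} C(n−r, j). Consequently the maximum size p(n,k,d) of a k-wise (n−d)-union family on [n] satisfies p(n,k,d) ≥ max_{0 ≤ i ≤ d/k} 2^{d−ki} · Σ_{j=0}^{i} C(n−d+ki, j). -/

import Mathlib

/-- A set `Y` is shattered by the family `F` if every subset of `Y`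
is the trace of some member of `F` on `Y`. -/
def Shatters {α : Type*} [DecidableEq α] (F : Finset (Finset α)) (Y : Finset α) : Prop :=
  ∀ T ⊆ Y, ∃ S ∈ F, S ∩ Y = T

/-- The VC dimension of a family: the largest cardinality of a shattered set. -/
noncomputable def vcDim {α : Type*} [DecidableEq α] (F : Finset (Finset α)) : ℕ :=
  sSup {m | ∃ Y : Finset α, Shatters F Y ∧ Y.card = m}

/-- `S₁ △ S₂ △ ⋯ △ S_k` for a `k`-tuple of sets. -/
def symmDiffAll {α : Type*} [DecidableEq α] {k : ℕ} (f : Fin k → Finset α) : Finset α :=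
  (List.ofFn f).foldr symmDiff ∅

/-- The `k`-fold symmetric difference family `△𝒜^k`. -/
def symmDiffFam {α : Type*} [DecidableEq α] (k : ℕ) (A : Finset (Finset α)) :
    Finset (Finset α) :=
  (Fintype.piFinset fun _ : Fin k => A).image symmDiffAll

/-- The family `𝒜₁ △ ⋯ △ 𝒜ₖ`. -/
def symmDiffFamMulti {α : Type*} [DecidableEq α] {k : ℕ} (A : Fin k → Finset (Finset α)) :
    Finset (Finset α) :=
  (Fintype.piFinset A).image symmDiffAll

/-- A family is `k`-wise `(n-d)`-union if any `k` of its members have union of size `≤ d`. -/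
def KwiseUnion {α : Type*} [DecidableEq α] (k d : ℕ) (A : Finset (Finset α)) : Prop :=
  ∀ f : Fin k → Finset α, (∀ i, f i ∈ A) → (Finset.univ.sup f).card ≤ d

/-- The `i`-compression of a family. -/
def compress {α : Type*} [DecidableEq α] (i : α) (A : Finset (Finset α)) :
    Finset (Finset α) :=
  A.image fun S => if S ∈ A ∧ S.erase i ∈ A then S else S.erase i

/-- The `(i,j)`-shift of a family. -/
def shiftIJ {α : Type*} [DecidableEq α] (i j : α) (A : Finset (Finset α)) :
    Finset (Finset α) :=
  A.image fun S => if i ∉ S ∧ j ∈ S ∧ insert i (S.erase j) ∉ A then insert i (S.erase j) else S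

/-- `p(n,k,d)`: the maximum size of a `k`-wise `(n-d)`-union family on `[n]`. -/
noncomputable def pMax (n k d : ℕ) : ℕ :=
  sSup {m | ∃ F : Finset (Finset (Fin n)), KwiseUnion k d F ∧ F.card = m}

lemma cardFilterLt (n m : ℕ) (h : m ≤ n) :
    ((Finset.univ : Finset (Fin n)).filter fun x : Fin n => (x : ℕ) < m).card = m := by
  have himg : (Finset.univ.image (Fin.castLE h)) =
      (Finset.univ : Finset (Fin n)).filter fun x : Fin n => (x : ℕ) < m := by
    ext y
    simp only [Finset.mem_image, Finset.mem_univ, true_and, Finset.mem_filter]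
    constructor
    · rintro ⟨a, rfl⟩; exact a.isLt
    · intro hy; exact ⟨⟨y, hy⟩, rfl⟩
  rw [← himg, Finset.card_image_of_injective _ (Fin.castLE_injective h), Finset.card_univ,
    Fintype.card_fin]

lemma aux12 (k d n : ℕ) (hdn : d ≤ n) (i : ℕ) (hki : k * i ≤ d) :
    KwiseUnion k d
        (Finset.univ.filter
          (fun S : Finset (Fin n) =>
            (S.filter fun x : Fin n => (x : ℕ) < n - (d - k * i)).card ≤ i)) ∧
      (Finset.univ.filter
          (fun S : Finset (Fin n) =>
            (S.filter fun x : Fin n => (x : ℕ) < n - (d - k * i)).card ≤ i)).card =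
        2 ^ (d - k * i) * ∑ j ∈ Finset.range (i + 1), (n - (d - k * i)).choose j := by
  classical
  set r := d - k * i with hr
  have hrd : r ≤ d := Nat.sub_le _ _
  have hrn : r ≤ n := hrd.trans hdn
  set p : Fin n → Prop := fun x => (x : ℕ) < n - r with hp
  set low : Finset (Fin n) := Finset.univ.filter p with hlowdef
  have hlow : low.card = n - r := cardFilterLt n (n - r) (Nat.sub_le _ _)
  have hhigh : ((Finset.univ : Finset (Fin n)).filter fun x => ¬ p x).card = r := by
    have := Finset.card_filter_add_card_filter_not (s := (Finset.univ : Finset (Fin n))) p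
    rw [← hlowdef, hlow, Finset.card_univ, Fintype.card_fin] at this
    omega
  constructor
  · -- k-wise union property
    intro f hf
    set U := Finset.univ.sup f with hU
    have hsplit := Finset.card_filter_add_card_filter_not (s := U) p
    have h1 : (U.filter p).card ≤ k * i := by
      have : U.filter p = Finset.univ.biUnion fun j => (f j).filter p := by
        rw [hU, Finset.sup_eq_biUnion, Finset.filter_biUnion]
      rw [this]
      calc (Finset.univ.biUnion fun j => (f j).filter p).card
          ≤ ∑ j : Fin k, ((f j).filter p).card := Finset.card_biUnion_le
        _ ≤ ∑ _j : Fin k, i := by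
            refine Finset.sum_le_sum fun j _ => ?_
            have := hf j
            simpa using (Finset.mem_filter.mp this).2
        _ = k * i := by simp [mul_comm]
    have h2 : (U.filter fun x => ¬ p x).card ≤ r :=
      le_trans (Finset.card_le_card (Finset.filter_subset_filter _ (Finset.subset_univ U)))
        (le_of_eq hhigh)
    omega
  · -- cardinality
    set P : Finset (Finset (Fin n)) := low.powerset.filter fun A => A.card ≤ i with hP
    set Q : Finset (Finset (Fin n)) :=
      ((Finset.univ : Finset (Fin n)).filter fun x => ¬ p x).powerset with hQ
    have key : (Finset.univ.filter
        (fun S : Finset (Fin n) => (S.filter p).card ≤ i)).card = (P ×ˢ Q).card := by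
      refine Finset.card_bij' (fun S _ => (S.filter p, S.filter fun x => ¬ p x))
        (fun A _ => A.1 ∪ A.2) ?_ ?_ ?_ ?_
      · intro S hS
        simp only [Finset.mem_filter, Finset.mem_univ, true_and] at hS
        simp only [Finset.mem_product, hP, hQ, Finset.mem_filter, Finset.mem_powerset]
        refine ⟨⟨?_, hS⟩, ?_⟩
        · exact Finset.filter_subset_filter _ (Finset.subset_univ S)
        · exact Finset.filter_subset_filter _ (Finset.subset_univ S)
      · intro A hA
        simp only [Finset.mem_product, hP, hQ, Finset.mem_filter, Finset.mem_powerset] at hA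
        obtain ⟨⟨hA1, hA1c⟩, hA2⟩ := hA
        simp only [Finset.mem_filter, Finset.mem_univ, true_and]
        have h1 : A.1.filter p = A.1 := by
          apply Finset.filter_true_of_mem
          intro x hx
          have := hA1 hx
          rw [hlowdef, Finset.mem_filter] at this
          exact this.2
        have h2 : A.2.filter p = ∅ := by
          apply Finset.filter_false_of_mem
          intro x hx
          have := hA2 hx
          rw [Finset.mem_filter] at this
          exact this.2
        rw [Finset.filter_union, h1, h2, Finset.union_empty]
        exact hA1c
      · intro S hS
        exact Finset.filter_union_filter_not_eq p S
      · intro A hA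
        simp only [Finset.mem_product, hP, hQ, Finset.mem_filter, Finset.mem_powerset] at hA
        obtain ⟨⟨hA1, hA1c⟩, hA2⟩ := hA
        have h1 : A.1.filter p = A.1 := by
          apply Finset.filter_true_of_mem
          intro x hx
          have := hA1 hx
          rw [hlowdef, Finset.mem_filter] at this
          exact this.2
        have h2 : A.2.filter p = ∅ := by
          apply Finset.filter_false_of_mem
          intro x hx
          have := hA2 hx
          rw [Finset.mem_filter] at this
          exact this.2
        have h1' : A.1.filter (fun x => ¬ p x) = ∅ := by
          apply Finset.filter_false_of_mem
          intro x hx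
          have := hA1 hx
          rw [hlowdef, Finset.mem_filter] at this
          exact not_not_intro this.2
        have h2' : A.2.filter (fun x => ¬ p x) = A.2 := by
          apply Finset.filter_true_of_mem
          intro x hx
          have := hA2 hx
          rw [Finset.mem_filter] at this
          exact this.2
        ext x <;>
          simp [Finset.filter_union, h1, h2, h1', h2']
    have hPcard : P.card = ∑ j ∈ Finset.range (i + 1), (n - r).choose j := by
      have hPeq : P = (Finset.range (i + 1)).biUnion fun j => low.powersetCard j := by
        ext A
        simp only [hP, Finset.mem_filter, Finset.mem_powerset, Finset.mem_biUnion,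
          Finset.mem_range, Finset.mem_powersetCard, Nat.lt_succ_iff]
        constructor
        · rintro ⟨hsub, hcard⟩; exact ⟨A.card, hcard, hsub, rfl⟩
        · rintro ⟨j, hj, hsub, rfl⟩; exact ⟨hsub, hj⟩
      rw [hPeq, Finset.card_biUnion]
      · refine Finset.sum_congr rfl fun j _ => ?_
        rw [Finset.card_powersetCard, hlow]
      · intro a _ b _ hab
        simp only [Finset.disjoint_left, Finset.mem_powersetCard]
        rintro A ⟨_, rfl⟩ ⟨_, h⟩
        exact hab h
    have hQcard : Q.card = 2 ^ r := by
      rw [hQ, Finset.card_powerset, hhigh]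
    rw [key, Finset.card_product, hPcard, hQcard, mul_comm]

/-- for `0 ≤ i ≤ ⌊d/k⌋` and `r = d − ki`, the family
`𝒜_{r,i} = {S ⊆ [n] : |S ∩ [n−r]| ≤ i}` is `k`-wise `(n−d)`-union and has size
`2^r · ∑_{j=0}^{i} C(n−r, j)`; consequently
`p(n,k,d) ≥ max_{0 ≤ i ≤ d/k} 2^{d−ki} · ∑_{j=0}^{i} C(n−d+ki, j)`. -/
theorem statement12 (k d n : ℕ) (hk : 0 < k) (hd : 0 < d) (hdn : d < n)
    (i : ℕ) (hi : i ≤ d / k) :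
    KwiseUnion k d
        (Finset.univ.filter
          (fun S : Finset (Fin n) =>
            (S.filter fun x : Fin n => (x : ℕ) < n - (d - k * i)).card ≤ i)) ∧
      (Finset.univ.filter
          (fun S : Finset (Fin n) =>
            (S.filter fun x : Fin n => (x : ℕ) < n - (d - k * i)).card ≤ i)).card =
        2 ^ (d - k * i) * ∑ j ∈ Finset.range (i + 1), (n - (d - k * i)).choose j ∧
      ∀ i' : ℕ, i' ≤ d / k →
        2 ^ (d - k * i') * ∑ j ∈ Finset.range (i' + 1), (n - d + k * i').choose j ≤
          pMax n k d := by
  have hki : k * i ≤ d := by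
    have := (Nat.le_div_iff_mul_le hk).mp hi
    exact mul_comm i k ▸ this
  obtain ⟨h1, h2⟩ := aux12 k d n hdn.le i hki
  refine ⟨h1, h2, ?_⟩
  intro i' hi'
  have hki' : k * i' ≤ d := by
    have := (Nat.le_div_iff_mul_le hk).mp hi'
    exact mul_comm i' k ▸ this
  obtain ⟨h1', h2'⟩ := aux12 k d n hdn.le i' hki'
  have heq : n - (d - k * i') = n - d + k * i' := tsub_tsub_assoc hdn.le hki'
  rw [← heq, ← h2']
  apply le_csSup
  · refine ⟨2 ^ n, ?_⟩
    rintro m ⟨F, _, rfl⟩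
    calc F.card ≤ Fintype.card (Finset (Fin n)) := Finset.card_le_univ F
      _ = 2 ^ n := by simp
  · exact ⟨_, h1', rfl⟩
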